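/- arXiv:2103.15247 — 3 statements merged into one kernel-verified Lean document; each statement's English description precedes it below -/
import Mathlib

section
/- If the deformed Cartan matrix C = (σ_{ij} - σ_{ij}^{-1})_{i,j∈I} is non-degenerate (over the field of rational functions in the parameters), then the shifted affine roots {A_{j,σ} : j ∈ I, σ a monomial} are algebraically independent elements of the Laurent ring in the variables Y_{i,τ}. -/
/-! Statement 2: if the deformed Cartan matrix `C = (σ_{ij} - σ_{ij}^{-1})` is non-degenerate,
then the shifted affine roots `A_{j,σ}` are algebraically independent.

The ring `R` of Laurent polynomials in `q, q₁, q₂, …` is modelled as the group algebra of the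
free abelian group `LMon = ℕ →₀ ℤ` of monomials (the generator `0` corresponds to `q`).
The Laurent ring `𝒴` in the variables `Y_{i,σ}` is the group algebra of the free abelian
group of exponent vectors `(I × LMon) →₀ ℤ`. -/

/-- Monomials `q^a ∏ q_i^{a_i}` as exponent vectors. -/
abbrev LMon : Type := ℕ →₀ ℤ

/-- The Laurent ring `R` in `q, q₁, q₂, …`. -/
abbrev LRing : Type := AddMonoidAlgebra ℤ LMon

/-- A monomial of `R` as an element of `R`. -/
noncomputable def eR (g : LMon) : LRing := AddMonoidAlgebra.single g 1

/-- The monomial `q`. -/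
noncomputable def qMon : LMon := Finsupp.single 0 1

/-- Exponent vectors of monomials in the variables `Y_{i,σ}`. -/
abbrev YMon (I : Type*) : Type _ := (I × LMon) →₀ ℤ

/-- The Laurent ring `𝒴` in the variables `Y_{i,σ}`. -/
abbrev YRing (I : Type*) : Type _ := AddMonoidAlgebra ℤ (YMon I)

/-- The shifted affine root `A_{j,σ} = Π_i Y_{i,σ_{ij}σ} Y_{i,σ_{ij}^{-1}σ}^{-1}`
(as an exponent vector). -/
noncomputable def affRoot {I : Type*} [Fintype I] (σm : I → I → LMon) (j : I) (σ : LMon) :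
    YMon I :=
  ∑ i : I, (Finsupp.single (i, σm i j + σ) (1 : ℤ) - Finsupp.single (i, -σm i j + σ) 1)

section AlgIndAux

variable {G : Type*} [AddCommGroup G] {ι : Type*} (g : ι → G)

/-- The exponent homomorphism `(ι →₀ ℕ) →+ G`, `n ↦ ∑ n i • g i`. -/
noncomputable def expHom : (ι →₀ ℕ) →+ G :=
  (Finsupp.linearCombination ℤ g).toAddMonoidHom.comp
    (Finsupp.mapRange.addMonoidHom (Nat.castAddMonoidHom ℤ))

lemma expHom_single (i : ι) : expHom g (Finsupp.single i 1) = g i := by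
  simp only [expHom, AddMonoidHom.comp_apply, Finsupp.mapRange.addMonoidHom_apply,
    LinearMap.toAddMonoidHom_coe]
  rw [Finsupp.mapRange_single]
  simpa using Finsupp.linearCombination_single ℤ (v := g) (1 : ℤ) i

lemma expHom_injective (hg : LinearIndependent ℤ g) : Function.Injective (expHom g) := by
  intro a b h
  have h2 : Finsupp.linearCombination ℤ g
        (Finsupp.mapRange.addMonoidHom (Nat.castAddMonoidHom ℤ) a)
      = Finsupp.linearCombination ℤ g
        (Finsupp.mapRange.addMonoidHom (Nat.castAddMonoidHom ℤ) b) := h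
  have h3 := hg h2
  exact Finsupp.mapRange_injective _ (map_zero _) Nat.cast_injective h3

/-- The ring homomorphism on the group algebras induced by `expHom`. -/
noncomputable def FHom : AddMonoidAlgebra ℤ (ι →₀ ℕ) →+* AddMonoidAlgebra ℤ G :=
  AddMonoidAlgebra.mapDomainRingHom ℤ (expHom g)

lemma FHom_single (n : ι →₀ ℕ) (a : ℤ) :
    FHom g (AddMonoidAlgebra.single n a) = AddMonoidAlgebra.single (expHom g n) a :=
  AddMonoidAlgebra.mapDomain_single

lemma FHom_injective (hg : LinearIndependent ℤ g) : Function.Injective (FHom g) :=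
  AddMonoidAlgebra.mapDomain_injective (expHom_injective g hg)

lemma aeval_eq_FHom :
    ((MvPolynomial.aeval
        (fun i => (AddMonoidAlgebra.single (g i) 1 : AddMonoidAlgebra ℤ G))).toRingHom :
      MvPolynomial ι ℤ →+* AddMonoidAlgebra ℤ G) = FHom g := by
  apply MvPolynomial.ringHom_ext
  · intro r
    show (MvPolynomial.aeval
        (fun i => (AddMonoidAlgebra.single (g i) 1 : AddMonoidAlgebra ℤ G)))
        (MvPolynomial.C r) = FHom g (MvPolynomial.C r)
    rw [MvPolynomial.aeval_C]
    have h1 : (MvPolynomial.C r : MvPolynomial ι ℤ) =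
        AddMonoidAlgebra.single (0 : ι →₀ ℕ) r := rfl
    rw [h1, FHom_single, map_zero]
    rw [Algebra.algebraMap_eq_smul_one, AddMonoidAlgebra.one_def, AddMonoidAlgebra.smul_single]
    simp
  · intro i
    show (MvPolynomial.aeval
        (fun i => (AddMonoidAlgebra.single (g i) 1 : AddMonoidAlgebra ℤ G)))
        (MvPolynomial.X i) = FHom g (MvPolynomial.X i)
    rw [MvPolynomial.aeval_X]
    have h1 : (MvPolynomial.X i : MvPolynomial ι ℤ) =
        AddMonoidAlgebra.single (Finsupp.single i 1) (1 : ℤ) := rfl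
    rw [h1, FHom_single, expHom_single]

/-- Auxiliary general lemma: if a family `g : ι → G` into an abelian group is
`ℤ`-linearly independent, then the corresponding monomials `single (g i) 1` are
algebraically independent in the group algebra. -/
theorem algInd_single (hg : LinearIndependent ℤ g) :
    AlgebraicIndependent ℤ
      (fun i => (AddMonoidAlgebra.single (g i) 1 : AddMonoidAlgebra ℤ G)) := by
  rw [algebraicIndependent_iff_injective_aeval]
  intro P Q h
  apply FHom_injective g hg
  exact ((RingHom.congr_fun (aeval_eq_FHom g) P).symm.trans h).trans
    (RingHom.congr_fun (aeval_eq_FHom g) Q)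

end AlgIndAux

/-- If the deformed Cartan matrix of fermionic type is non-degenerate then the shifted
affine roots `A_{j,σ}`, `j ∈ I`, `σ` a monomial, are algebraically independent. -/
theorem statement2 {I : Type*} [Fintype I] [DecidableEq I]
    (σm : I → I → LMon)
    (hsym : ∀ i j, σm i j = σm j i) (hdiag : ∀ i, σm i i = qMon)
    (hC : (Matrix.of fun i j : I => eR (σm i j) - eR (-σm i j)).det ≠ 0) :
    AlgebraicIndependent ℤ
      (fun p : I × LMon =>
        (AddMonoidAlgebra.single (affRoot σm p.1 p.2) 1 : YRing I)) := by
  classical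
  set C : Matrix I I LRing := Matrix.of fun i j : I => eR (σm i j) - eR (-σm i j) with hCdef
  -- multiplication by `C`, as a `ℤ`-linear map
  let T : (I → LRing) →ₗ[ℤ] (I → LRing) :=
    { toFun := C.mulVec
      map_add' := C.mulVec_add
      map_smul' := fun z v => C.mulVec_smul z v }
  have hker : LinearMap.ker T = ⊥ := by
    rw [LinearMap.ker_eq_bot']
    intro v hv
    have hv' : C.mulVec v = 0 := hv
    have h2 : C.det • v = 0 := by
      have h3 := congrArg C.adjugate.mulVec hv'
      rwa [Matrix.mulVec_mulVec, Matrix.adjugate_mul, Matrix.smul_mulVec,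
        Matrix.one_mulVec, Matrix.mulVec_zero] at h3
    funext i
    have h4 : C.det * v i = 0 := congrFun h2 i
    rcases mul_eq_zero.mp h4 with h | h
    · exact absurd h hC
    · simpa using h
  -- linear independence of the vectors `Pi.single j (eR σ)`
  have li1 : LinearIndependent ℤ
      (fun p : I × LMon => (Pi.single p.1 (eR p.2) : I → LRing)) := by
    have hB := (Pi.basis fun _ : I =>
      (Finsupp.basisSingleOne.map (AddMonoidAlgebra.coeffLinearEquiv ℤ).symm :
        Module.Basis LMon ℤ LRing)).linearIndependent
    have hcomp := hB.comp (fun p : I × LMon => (⟨p.1, p.2⟩ : (_ : I) × LMon))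
      (fun p q h => by
        obtain ⟨h1, h2⟩ := Sigma.mk.inj_iff.mp h
        exact Prod.ext h1 (eq_of_heq h2))
    have heq : (fun p : I × LMon => (Pi.single p.1 (eR p.2) : I → LRing)) =
        (⇑(Pi.basis fun _ : I => (Finsupp.basisSingleOne.map (AddMonoidAlgebra.coeffLinearEquiv ℤ).symm :
          Module.Basis LMon ℤ LRing)) ∘
          fun p : I × LMon => (⟨p.1, p.2⟩ : (_ : I) × LMon)) := by
      funext p
      simp [Pi.basis_apply, Finsupp.coe_basisSingleOne, eR, Module.Basis.map_apply]
    rw [heq]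
    exact hcomp
  -- the linear equivalence `YMon I ≃ (I → LRing)`
  let Φ : YMon I ≃ₗ[ℤ] (I → LRing) :=
    (Finsupp.finsuppProdLEquiv ℤ).trans ((Finsupp.mapRange.linearEquiv
      (AddMonoidAlgebra.coeffLinearEquiv ℤ).symm).trans (Finsupp.linearEquivFunOnFinite ℤ LRing I))
  have hΦsingle : ∀ (k : I) (τ : LMon),
      Φ (Finsupp.single (k, τ) (1:ℤ)) = Pi.single k (eR τ) := by
    intro k τ
    funext i
    ext τ'
    have h1 : (Φ (Finsupp.single (k, τ) (1:ℤ)) i).coeff τ' = (Finsupp.single (k,τ) (1:ℤ)) (i, τ') := by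
      show ((Finsupp.finsuppProdLEquiv ℤ) (Finsupp.single (k, τ) (1:ℤ)) i) τ' = _
      exact Finsupp.curry_apply _ _ _
    rw [h1, Finsupp.single_apply]
    rcases eq_or_ne i k with rfl | h
    · simp only [Pi.single_eq_same, eR]
      rw [AddMonoidAlgebra.coeff_single_apply]
      simp [Prod.ext_iff]
    · rw [Pi.single_eq_of_ne h]
      simp [Prod.ext_iff, Ne.symm h]
  have hΦaff : ∀ (j : I) (σ : LMon),
      Φ (affRoot σm j σ) = T (Pi.single j (eR σ)) := by
    intro j σ
    have hT : T (Pi.single j (eR σ)) = fun i => eR (σm i j + σ) - eR (-σm i j + σ) := by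
      show C.mulVec (Pi.single j (eR σ)) = _
      rw [Matrix.mulVec_single]
      funext i
      show (eR (σm i j) - eR (-σm i j)) * eR σ = _
      rw [sub_mul]
      simp [eR, AddMonoidAlgebra.single_mul_single]
    rw [hT, affRoot, map_sum]
    calc ∑ i : I, Φ (Finsupp.single (i, σm i j + σ) (1:ℤ) -
            Finsupp.single (i, -σm i j + σ) 1)
        = ∑ i : I, (Pi.single i (eR (σm i j + σ)) - Pi.single i (eR (-σm i j + σ))) := by
          refine Finset.sum_congr rfl fun i _ => ?_
          rw [map_sub, hΦsingle, hΦsingle]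
      _ = ∑ i : I, Pi.single i (eR (σm i j + σ) - eR (-σm i j + σ)) := by
          simp [Pi.single_sub]
      _ = fun i => eR (σm i j + σ) - eR (-σm i j + σ) :=
          Finset.univ_sum_single _
  have li3 : LinearIndependent ℤ (fun p : I × LMon => affRoot σm p.1 p.2) := by
    have h := (li1.map' T hker).map' Φ.symm.toLinearMap
      (LinearMap.ker_eq_bot.mpr Φ.symm.injective)
    have heq : (fun p : I × LMon => affRoot σm p.1 p.2) =
        (⇑Φ.symm.toLinearMap ∘ (⇑T ∘ fun p : I × LMon =>
          (Pi.single p.1 (eR p.2) : I → LRing))) := by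
      funext p
      show affRoot σm p.1 p.2 = Φ.symm (T (Pi.single p.1 (eR p.2)))
      rw [← hΦaff]
      exact (Φ.symm_apply_apply _).symm
    rw [heq]
    exact h
  exact algInd_single _ li3
end

section
/- For the gl_{2,1} deformed Cartan matrix, the infinite sum χ₁⁺ = Σ_{i≥0} (Y_{1,qp^{-i}} Y_{2,q₁p^{-i}} Y_{2,q₁}^{-1} + Y_{1,q^{-1}p^{-i}} Y_{2,q₁^{-1}p^{-i}} Y_{2,q₁}^{-1}) satisfies: denoting its monomials V_0, V_1, V_2, ... in the listed order (alternating the two summand types with increasing i), one has V_{2i+1} = A_{1,p^{-i}}^{-1} V_{2i} and V_{2i+2} = A_{2,q₂p^{-i}}^{-1} V_{2i+1} for all i ≥ 0. -/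
/-! Statement 8: the monomials of the gl_{2,1} qq-character
`χ₁⁺ = Σ_{i≥0} (Y_{1,qp^{-i}} Y_{2,q₁p^{-i}} Y_{2,q₁}^{-1} + Y_{1,q^{-1}p^{-i}} Y_{2,q₁^{-1}p^{-i}} Y_{2,q₁}^{-1})`
are connected by affine roots: `V_{2i+1} = A_{1,p^{-i}}^{-1} V_{2i}` and
`V_{2i+2} = A_{2,q₂p^{-i}}^{-1} V_{2i+1}`.

Monomials in `q, q₁` are modelled by their exponent pairs in `Γ = ℤ × ℤ`
(`q ↦ (1,0)`, `q₁ ↦ (0,1)`, so `q₂ = q⁻¹q₁⁻¹ ↦ (-1,-1)`, `p = q²q₁² ↦ (2,2)`).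
Monomials in the `Y_{i,σ}` (colors `i ∈ {1,2}`, indexed by `Fin 2`) are exponent vectors. -/

namespace Stmt8

abbrev Γ : Type := ℤ × ℤ
abbrev G : Type := (Fin 2 × Γ) →₀ ℤ

def qe : Γ := (1, 0)
def q1e : Γ := (0, 1)
def q2e : Γ := (-1, -1)
def pe : Γ := (2, 2)

/-- The variable `Y_{i,σ}`. -/
noncomputable def Yv (i : Fin 2) (g : Γ) : G := Finsupp.single (i, g) 1

/-- `A_{1,σ} = Y_{1,qσ}Y_{1,q⁻¹σ}⁻¹ Y_{2,q₁σ}Y_{2,q₁⁻¹σ}⁻¹`. -/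
noncomputable def A1 (σ : Γ) : G :=
  Yv 0 (qe + σ) - Yv 0 (-qe + σ) + Yv 1 (q1e + σ) - Yv 1 (-q1e + σ)

/-- `A_{2,σ} = Y_{1,q₁σ}Y_{1,q₁⁻¹σ}⁻¹ Y_{2,qσ}Y_{2,q⁻¹σ}⁻¹`. -/
noncomputable def A2 (σ : Γ) : G :=
  Yv 0 (q1e + σ) - Yv 0 (-q1e + σ) + Yv 1 (qe + σ) - Yv 1 (-qe + σ)

/-- `V_{2i} = Y_{1,qp^{-i}} Y_{2,q₁p^{-i}} Y_{2,q₁}^{-1}`. -/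
noncomputable def Ve (i : ℕ) : G := Yv 0 (qe - i • pe) + Yv 1 (q1e - i • pe) - Yv 1 q1e

/-- `V_{2i+1} = Y_{1,q^{-1}p^{-i}} Y_{2,q₁^{-1}p^{-i}} Y_{2,q₁}^{-1}`. -/
noncomputable def Vo (i : ℕ) : G := Yv 0 (-qe - i • pe) + Yv 1 (-q1e - i • pe) - Yv 1 q1e

/-- The monomials `V_0, V_1, V_2, …` of `χ₁⁺` in the listed order. -/
noncomputable def V (n : ℕ) : G := if n % 2 = 0 then Ve (n / 2) else Vo (n / 2)

theorem statement8 :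
    ∀ i : ℕ,
      V (2 * i + 1) = V (2 * i) - A1 (-(i • pe)) ∧
      V (2 * i + 2) = V (2 * i + 1) - A2 (q2e - i • pe) := by
  intro i
  have h1 : (2 * i + 1) % 2 = 1 := by omega
  have h2 : (2 * i + 1) / 2 = i := by omega
  have h3 : (2 * i + 2) % 2 = 0 := by omega
  have h4 : (2 * i + 2) / 2 = i + 1 := by omega
  have h5 : (2 * i) % 2 = 0 := by omega
  have h6 : (2 * i) / 2 = i := by omega
  constructor
  · simp only [V, h1, h2, h5, h6, if_true, if_false, Nat.one_ne_zero]
    have e1 : qe + -(i • pe) = qe - i • pe := by abel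
    have e2 : -qe + -(i • pe) = -qe - i • pe := by abel
    have e3 : q1e + -(i • pe) = q1e - i • pe := by abel
    have e4 : -q1e + -(i • pe) = -q1e - i • pe := by abel
    rw [Vo, Ve, A1, e1, e2, e3, e4]
    abel
  · simp only [V, h1, h2, h3, h4, if_true, if_false, Nat.one_ne_zero]
    have e1 : q1e + (q2e - i • pe) = -qe - i • pe := by
      simp [qe, q1e, q2e, pe, Prod.ext_iff]; ring
    have e2 : -q1e + (q2e - i • pe) = qe - (i + 1) • pe := by
      simp [qe, q1e, q2e, pe, Prod.ext_iff, add_smul]; constructor <;> ring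
    have e3 : qe + (q2e - i • pe) = -q1e - i • pe := by
      simp [qe, q1e, q2e, pe, Prod.ext_iff]; ring
    have e4 : -qe + (q2e - i • pe) = q1e - (i + 1) • pe := by
      simp [qe, q1e, q2e, pe, Prod.ext_iff, add_smul]; constructor <;> ring
    rw [Vo, Ve, A2, e1, e2, e3, e4]
    abel

end Stmt8
end

section
/- For the D̂(2,1;α) data, the sum χ_R = Σ_{i∈ℤ} (R⁺_{1,p^i} + R⁻_{1,p^i}), where R₁^± = Y_{0,q₃^{±1}}^{-1} Y_{1,q₂^{±1}}^{-1} Y_{2,q₁^{∓1}} Y_{3,q₀^{∓1}}, is a qq-character of degree (-1,-1,1,1): each monomial R⁻_{1,p^i} is connected to R⁺_{1,p^i} by an affine root of color 2 or 3 and the degrees deg_j of all monomials equal (-1,-1,1,1) for j=(0,1,2,3). -/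
/-! Statement 14: for the D̂(2,1;α) data, `χ_R = Σ_{i∈ℤ}(R⁺_{1,p^i} + R⁻_{1,p^i})` is a
qq-character of degree `(-1,-1,1,1)`: each monomial `R⁻_{1,p^i}` is connected to
`R⁺_{1,p^i}` by an affine root of color 2 or 3, and all monomials have degree `(-1,-1,1,1)`.

The group `Γ` of monomials in `q₀, q₁, q₂` is written additively; `q₃ = (q₀q₁q₂)⁻¹`.
Colors `0,1,2,3` are indexed by `Fin 4`; monomials in the `Y_{i,σ}` are exponent vectors. -/

namespace Stmt14

abbrev G (Γ : Type*) : Type _ := (Fin 4 × Γ) →₀ ℤ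

variable {Γ : Type*} [AddCommGroup Γ]

noncomputable def Yv (i : Fin 4) (g : Γ) : G Γ := Finsupp.single (i, g) 1

def q3 (q0 q1 q2 : Γ) : Γ := -q0 - q1 - q2

/-- The entries `σ_{ij}` of the D̂(2,1;α) deformed Cartan matrix. -/
noncomputable def σD (q0 q1 q2 : Γ) : Fin 4 → Fin 4 → Γ :=
  fun i j =>
    !![q0, q1, q2, q3 q0 q1 q2;
       q1, q0, q3 q0 q1 q2, q2;
       q2, q3 q0 q1 q2, q0, q1;
       q3 q0 q1 q2, q2, q1, q0] i j

/-- The shifted affine root `A_{c,τ} = Π_i Y_{i,σ_{ic}τ}Y_{i,σ_{ic}^{-1}τ}^{-1}`. -/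
noncomputable def A (q0 q1 q2 : Γ) (c : Fin 4) (τ : Γ) : G Γ :=
  ∑ i : Fin 4, (Yv i (σD q0 q1 q2 i c + τ) - Yv i (-σD q0 q1 q2 i c + τ))

/-- `R₁⁺ = Y_{0,q₃}^{-1} Y_{1,q₂}^{-1} Y_{2,q₁^{-1}} Y_{3,q₀^{-1}}`, shifted by `σ`. -/
noncomputable def Rp (q0 q1 q2 σ : Γ) : G Γ :=
  -Yv 0 (q3 q0 q1 q2 + σ) - Yv 1 (q2 + σ) + Yv 2 (-q1 + σ) + Yv 3 (-q0 + σ)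

/-- `R₁⁻ = Y_{0,q₃^{-1}}^{-1} Y_{1,q₂^{-1}}^{-1} Y_{2,q₁} Y_{3,q₀}`, shifted by `σ`. -/
noncomputable def Rm (q0 q1 q2 σ : Γ) : G Γ :=
  -Yv 0 (-q3 q0 q1 q2 + σ) - Yv 1 (-q2 + σ) + Yv 2 (q1 + σ) + Yv 3 (q0 + σ)

/-- The degree `deg_j` of a monomial (exponent sum of the color-`j` variables). -/
noncomputable def degc (j : Fin 4) (m : G Γ) : ℤ :=
  m.sum fun p c => if p.1 = j then c else 0


lemma degc_eq (j : Fin 4) (m : G Γ) :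
    degc j m = Finsupp.liftAddHom (fun p : Fin 4 × Γ => if p.1 = j then AddMonoidHom.id ℤ else 0) m := by
  unfold degc
  rw [Finsupp.liftAddHom_apply]
  congr 1; ext p c; split <;> simp_all

lemma degc_single (j i : Fin 4) (g : Γ) (n : ℤ) :
    degc j (Finsupp.single (i, g) n) = if i = j then n else 0 := by
  rw [degc_eq, Finsupp.liftAddHom_apply_single]
  split <;> simp_all

lemma degc_add (j : Fin 4) (a b : G Γ) : degc j (a + b) = degc j a + degc j b := by
  rw [degc_eq, degc_eq, degc_eq, map_add]

lemma degc_neg (j : Fin 4) (a : G Γ) : degc j (-a) = -degc j a := by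
  rw [degc_eq, degc_eq, map_neg]

lemma degc_sub (j : Fin 4) (a b : G Γ) : degc j (a - b) = degc j a - degc j b := by
  rw [degc_eq, degc_eq, degc_eq, map_sub]

lemma σD03 (q0 q1 q2 : Γ) : σD q0 q1 q2 0 3 = q3 q0 q1 q2 := rfl
lemma σD13 (q0 q1 q2 : Γ) : σD q0 q1 q2 1 3 = q2 := rfl
lemma σD23 (q0 q1 q2 : Γ) : σD q0 q1 q2 2 3 = q1 := rfl
lemma σD33 (q0 q1 q2 : Γ) : σD q0 q1 q2 3 3 = q0 := rfl

theorem statement14 (q0 q1 q2 p : Γ) :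
    (∀ i : ℤ, ∀ m ∈ ({Rp q0 q1 q2 (i • p), Rm q0 q1 q2 (i • p)} : Set (G Γ)),
      degc 0 m = -1 ∧ degc 1 m = -1 ∧ degc 2 m = 1 ∧ degc 3 m = 1) ∧
    (∀ i : ℤ, ∃ c : Fin 4, ∃ τ : Γ, (c = 2 ∨ c = 3) ∧
      Rp q0 q1 q2 (i • p) = Rm q0 q1 q2 (i • p) - A q0 q1 q2 c τ) := by
  constructor
  · rintro i m hm
    have h : ∀ σ : Γ, ∀ m ∈ ({Rp q0 q1 q2 σ, Rm q0 q1 q2 σ} : Set (G Γ)),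
        degc 0 m = -1 ∧ degc 1 m = -1 ∧ degc 2 m = 1 ∧ degc 3 m = 1 := by
      rintro σ m (rfl | rfl) <;>
        refine ⟨?_, ?_, ?_, ?_⟩ <;>
        · simp only [Rp, Rm, Yv, degc_add, degc_sub, degc_neg, degc_single]
          decide
    exact h (i • p) m hm
  · intro i
    refine ⟨3, i • p, Or.inr rfl, ?_⟩
    rw [Rp, Rm, A, Fin.sum_univ_four, σD03, σD13, σD23, σD33]
    abel

end Stmt14
end
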